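/- Let X₁,…,Xₙ be independent random variables, each uniformly distributed on {-1, 1} (i.e., αᵢ = 1/2, kᵢ = 2 in the general theorem). Then for every x ∈ ℝ, P(X₁+⋯+Xₙ ∈ (x-1, x+1]) ≤ binomial(n, ⌊n/2⌋)/2ⁿ. (Erdős's Littlewood–Offord inequality as a special case.) -/

import Mathlib

open MeasureTheory ProbabilityTheory Finset
open scoped ENNReal NNReal

noncomputable def sgn (b : Bool) : ℝ := if b then 1 else -1

lemma sum_sgn {n : ℕ} (ε : Fin n → Bool) :
    ∑ i, sgn (ε i) = 2 * ((univ.filter (fun i => ε i = true)).card : ℝ) - n := by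
  classical
  have h := Finset.card_filter_add_card_filter_not (s := (univ : Finset (Fin n)))
    (p := fun i => ε i = true)
  simp only [Finset.card_univ, Fintype.card_fin] at h
  unfold sgn
  rw [Finset.sum_ite]
  simp only [Finset.sum_const, nsmul_eq_mul, mul_one, mul_neg_one]
  have : ((univ.filter (fun i => ¬ ε i = true)).card : ℝ)
      = n - (univ.filter (fun i => ε i = true)).card := by
    have := congrArg (fun k : ℕ => (k : ℝ)) h
    push_cast at this ⊢
    linarith
  rw [this]; ring

lemma card_bound (n : ℕ) (x : ℝ) :
    (univ.filter (fun ε : Fin n → Bool => (∑ i, sgn (ε i)) ∈ Set.Ioc (x-1) (x+1))).card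
      ≤ n.choose (n / 2) := by
  classical
  set S := univ.filter (fun ε : Fin n → Bool => (∑ i, sgn (ε i)) ∈ Set.Ioc (x-1) (x+1)) with hS
  rcases S.eq_empty_or_nonempty with h | ⟨ε₀, hε₀⟩
  · simp [h]
  set t₀ := (univ.filter (fun i => ε₀ i = true)).card with ht₀
  have hmem : ∀ ε ∈ S, (∑ i, sgn (ε i)) ∈ Set.Ioc (x-1) (x+1) := by
    intro ε hε; exact (Finset.mem_filter.mp hε).2
  -- all elements of S have same count t₀
  have hsame : ∀ ε ∈ S, (univ.filter (fun i => ε i = true)).card = t₀ := by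
    intro ε hε
    by_contra hne
    have h1 := hmem ε hε
    have h2 := hmem ε₀ hε₀
    rw [sum_sgn] at h1 h2
    set t := (univ.filter (fun i => ε i = true)).card
    obtain ⟨ha1, ha2⟩ := h1
    obtain ⟨hb1, hb2⟩ := h2
    rcases Nat.lt_or_ge t t₀ with hlt | hge
    · have hc : (t:ℝ) + 1 ≤ t₀ := by exact_mod_cast hlt
      linarith
    · have hlt : t₀ < t := lt_of_le_of_ne hge fun h => hne h.symm
      have hc : (t₀:ℝ) + 1 ≤ t := by exact_mod_cast hlt
      linarith
  have hsub : S ⊆ univ.filter (fun ε : Fin n → Bool =>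
      (univ.filter (fun i => ε i = true)).card = t₀) := by
    intro ε hε; exact Finset.mem_filter.mpr ⟨Finset.mem_univ _, hsame ε hε⟩
  refine le_trans (Finset.card_le_card hsub) (le_trans ?_ (Nat.choose_le_middle t₀ n))
  -- card of {ε | count = t₀} ≤ choose n t₀
  have : (univ.filter (fun ε : Fin n → Bool =>
      (univ.filter (fun i => ε i = true)).card = t₀)).card
      ≤ (Finset.powersetCard t₀ (univ : Finset (Fin n))).card := by
    apply Finset.card_le_card_of_injOn (fun ε => univ.filter (fun i => ε i = true))
    · intro ε hε
      rw [Finset.mem_coe, Finset.mem_powersetCard_univ]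
      exact (Finset.mem_filter.mp (Finset.mem_coe.mp hε)).2
    · intro ε _ ε' _ hff
      funext i
      simp only at hff
      have := Finset.ext_iff.mp hff i
      simp only [Finset.mem_filter, Finset.mem_univ, true_and] at this
      by_cases h : ε i <;> by_cases h' : ε' i <;> simp_all
  simpa [Finset.card_powersetCard] using this

noncomputable def nu : Measure ℝ := (2 : ℝ≥0∞)⁻¹ • (Measure.dirac (-1) + Measure.dirac 1)

instance : IsProbabilityMeasure nu := by
  constructor
  simp [nu, Measure.add_apply, ENNReal.inv_two_add_inv_two]

lemma nu_apply (s : Set ℝ) (hs : MeasurableSet s) :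
    nu s = (2 : ℝ≥0∞)⁻¹ * ∑ b : Bool, Measure.dirac (sgn b) s := by
  simp [nu, Measure.add_apply, Fintype.sum_bool, sgn, mul_add, add_comm]

lemma map_eq_pi {Ω : Type*} [MeasurableSpace Ω]
    (P : Measure Ω) [IsProbabilityMeasure P]
    (n : ℕ) (X : Fin n → Ω → ℝ) (hmeas : ∀ i, Measurable (X i))
    (hindep : iIndepFun X P)
    (hunif : ∀ i, P.map (X i) = (2 : ℝ≥0∞)⁻¹ • (Measure.dirac (-1) + Measure.dirac 1)) :
    P.map (fun ω i => X i ω) = Measure.pi (fun _ : Fin n => nu) := by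
  refine (Measure.pi_eq (μ := fun _ : Fin n => nu) fun s hs => ?_).symm
  rw [Measure.map_apply (measurable_pi_lambda _ hmeas) (MeasurableSet.univ_pi hs)]
  have hpre : (fun ω i => X i ω) ⁻¹' Set.univ.pi s = ⋂ i ∈ Finset.univ, X i ⁻¹' s i := by
    ext ω; simp [Set.mem_pi]
  rw [hpre, hindep.measure_inter_preimage_eq_mul Finset.univ (fun i _ => hs i)]
  refine Finset.prod_congr rfl fun i _ => ?_
  rw [← Measure.map_apply (hmeas i) (hs i), hunif i]; rfl

lemma pi_eq_sum_dirac (n : ℕ) :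
    Measure.pi (fun _ : Fin n => nu) =
      ((2 : ℝ≥0∞) ^ n)⁻¹ • ∑ ε : Fin n → Bool, Measure.dirac (fun i => sgn (ε i)) := by
  refine (Measure.pi_eq (μ := fun _ : Fin n => nu) fun s hs => ?_)
  rw [Measure.smul_apply, Measure.finset_sum_apply]
  have hdirac : ∀ ε : Fin n → Bool,
      Measure.dirac (fun i => sgn (ε i)) (Set.univ.pi s) = ∏ i, Measure.dirac (sgn (ε i)) (s i) := by
    intro ε
    by_cases h : ∀ i, sgn (ε i) ∈ s i
    · rw [Measure.dirac_apply_of_mem (by simp [Set.mem_pi]; exact h)]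
      symm
      exact Finset.prod_eq_one fun i _ => Measure.dirac_apply_of_mem (h i)
    · push_neg at h
      obtain ⟨i, hi⟩ := h
      rw [Measure.dirac_apply' _ (MeasurableSet.univ_pi hs), Set.indicator_of_notMem
        (by simp [Set.mem_pi]; exact ⟨i, hi⟩)]
      symm
      exact Finset.prod_eq_zero (Finset.mem_univ i)
        (by rw [Measure.dirac_apply' _ (hs i), Set.indicator_of_notMem hi])
  simp only [hdirac]
  rw [← Fintype.prod_sum (f := fun (i : Fin n) (b : Bool) => Measure.dirac (sgn b) (s i))]
  calc ((2:ℝ≥0∞) ^ n)⁻¹ * ∏ i, ∑ b : Bool, Measure.dirac (sgn b) (s i)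
      = ∏ i : Fin n, (2:ℝ≥0∞)⁻¹ * ∑ b : Bool, Measure.dirac (sgn b) (s i) := by
        rw [Finset.prod_mul_distrib, Finset.prod_const, ← ENNReal.inv_pow]
        simp
    _ = ∏ i, nu (s i) := Finset.prod_congr rfl fun i _ => (nu_apply _ (hs i)).symm

/-- Erdős's Littlewood–Offord inequality: for independent uniform ±1 variables,
P(X₁+⋯+Xₙ ∈ (x-1, x+1]) ≤ C(n, ⌊n/2⌋)/2ⁿ. -/
theorem erdos_littlewood_offord {Ω : Type*} [MeasurableSpace Ω]
    (P : Measure Ω) [IsProbabilityMeasure P]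
    (n : ℕ) (X : Fin n → Ω → ℝ) (hmeas : ∀ i, Measurable (X i))
    (hindep : iIndepFun X P)
    (hunif : ∀ i, P.map (X i) = (2 : ℝ≥0∞)⁻¹ • (Measure.dirac (-1) + Measure.dirac 1))
    (x : ℝ) :
    P {ω | (∑ i, X i ω) ∈ Set.Ioc (x - 1) (x + 1)} ≤
      (n.choose (n / 2) : ℝ≥0∞) / 2 ^ n := by
  classical
  set A : Set (Fin n → ℝ) := {y | (∑ i, y i) ∈ Set.Ioc (x - 1) (x + 1)} with hA_def
  have hA : MeasurableSet A := by
    have hsum : Measurable fun y : Fin n → ℝ => ∑ i, y i :=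
      Finset.measurable_sum Finset.univ fun i _ => measurable_pi_apply i
    exact hsum measurableSet_Ioc
  have hF : Measurable fun ω i => X i ω := measurable_pi_lambda _ hmeas
  have h1 : P {ω | (∑ i, X i ω) ∈ Set.Ioc (x - 1) (x + 1)}
      = (P.map (fun ω i => X i ω)) A := by
    rw [Measure.map_apply hF hA]
    rfl
  rw [h1, map_eq_pi P n X hmeas hindep hunif, pi_eq_sum_dirac n,
    Measure.smul_apply, Measure.finset_sum_apply]
  have h2 : ∀ ε : Fin n → Bool, Measure.dirac (fun i => sgn (ε i)) A
      = if (∑ i, sgn (ε i)) ∈ Set.Ioc (x - 1) (x + 1) then (1 : ℝ≥0∞) else 0 := by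
    intro ε
    rw [Measure.dirac_apply' _ hA, Set.indicator_apply]
    simp [hA_def]
  simp only [h2, Finset.sum_boole]
  rw [smul_eq_mul, ENNReal.div_eq_inv_mul]
  gcongr
  have := card_bound n x
  simp only [Set.mem_Ioc] at this
  exact_mod_cast this
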